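/- Let P be a symmetric positive semidefinite n×n matrix such that R(P) := BᵀPB + σ²·B̄ᵀPB̄ is positive definite. Then Φ(P) is symmetric positive semidefinite, Φ(P) ⪯ AᵀPA + σ²·ĀᵀPĀ, and Tr Φ(P) ≤ λ_max(AAᵀ + σ²·ĀĀᵀ)·Tr P. -/

import Mathlib

open Matrix MeasureTheory ProbabilityTheory
open scoped ENNReal Classical

noncomputable section

namespace SCS

/-! ### Matrix-analytic definitions -/

/-- Rayleigh-quotient definition of the largest eigenvalue of a symmetric matrix. -/
def lamMax {n : ℕ} (M : Matrix (Fin n) (Fin n) ℝ) : ℝ :=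
  ⨆ x : {x : Fin n → ℝ // x ⬝ᵥ x = 1}, x.1 ⬝ᵥ M.mulVec x.1

/-- Rayleigh-quotient definition of the smallest eigenvalue of a symmetric matrix. -/
def lamMin {n : ℕ} (M : Matrix (Fin n) (Fin n) ℝ) : ℝ :=
  ⨅ x : {x : Fin n → ℝ // x ⬝ᵥ x = 1}, x.1 ⬝ᵥ M.mulVec x.1

/-- Spectral norm (the operator norm induced by the Euclidean norm). -/
def specNorm {p q : ℕ} (M : Matrix (Fin p) (Fin q) ℝ) : ℝ :=
  Real.sqrt (lamMax (Mᵀ * M))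

variable {n m : ℕ}

/-- `R(P) = BᵀPB + σ²·B̄ᵀPB̄`. -/
def Rop (σ : ℝ) (B Bbar : Matrix (Fin n) (Fin m) ℝ) (P : Matrix (Fin n) (Fin n) ℝ) :
    Matrix (Fin m) (Fin m) ℝ :=
  Bᵀ * P * B + σ ^ 2 • (Bbarᵀ * P * Bbar)

/-- `S(P) = AᵀPB + σ²·ĀᵀPB̄`. -/
def Sop (σ : ℝ) (A Abar : Matrix (Fin n) (Fin n) ℝ) (B Bbar : Matrix (Fin n) (Fin m) ℝ)
    (P : Matrix (Fin n) (Fin n) ℝ) : Matrix (Fin n) (Fin m) ℝ :=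
  Aᵀ * P * B + σ ^ 2 • (Abarᵀ * P * Bbar)

/-- `Φ(P) = AᵀPA + σ²·ĀᵀPĀ − S(P)·R(P)⁻¹·S(P)ᵀ`. -/
def Phi (σ : ℝ) (A Abar : Matrix (Fin n) (Fin n) ℝ) (B Bbar : Matrix (Fin n) (Fin m) ℝ)
    (P : Matrix (Fin n) (Fin n) ℝ) : Matrix (Fin n) (Fin n) ℝ :=
  Aᵀ * P * A + σ ^ 2 • (Abarᵀ * P * Abar)
    - Sop σ A Abar B Bbar P * (Rop σ B Bbar P)⁻¹ * (Sop σ A Abar B Bbar P)ᵀ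

/-- `K(P) = R(P)⁻¹·S(P)ᵀ`. -/
def Kgain (σ : ℝ) (A Abar : Matrix (Fin n) (Fin n) ℝ) (B Bbar : Matrix (Fin n) (Fin m) ℝ)
    (P : Matrix (Fin n) (Fin n) ℝ) : Matrix (Fin m) (Fin n) ℝ :=
  (Rop σ B Bbar P)⁻¹ * (Sop σ A Abar B Bbar P)ᵀ

/-- `C_A = λ_max(AAᵀ + σ²·ĀĀᵀ)`. -/
def CA (σ : ℝ) (A Abar : Matrix (Fin n) (Fin n) ℝ) : ℝ :=
  lamMax (A * Aᵀ + σ ^ 2 • (Abar * Abarᵀ))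

/-- `δ_τ = (τ/n)/((1−τ)·C_A + τ)`. -/
def deltaTau (σ : ℝ) (A Abar : Matrix (Fin n) (Fin n) ℝ) (τ : ℝ) : ℝ :=
  (τ / (n : ℝ)) / ((1 - τ) * CA σ A Abar + τ)

/-- The regularized normalized operator
`Φ̂_τ(P) = ((1−τ)·Φ(P) + (τ/n)·I) / Tr((1−τ)·Φ(P) + (τ/n)·I)`. -/
def PhiHat (σ : ℝ) (A Abar : Matrix (Fin n) (Fin n) ℝ) (B Bbar : Matrix (Fin n) (Fin m) ℝ)
    (τ : ℝ) (P : Matrix (Fin n) (Fin n) ℝ) : Matrix (Fin n) (Fin n) ℝ :=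
  (Matrix.trace ((1 - τ) • Phi σ A Abar B Bbar P
      + (τ / (n : ℝ)) • (1 : Matrix (Fin n) (Fin n) ℝ)))⁻¹ •
    ((1 - τ) • Phi σ A Abar B Bbar P + (τ / (n : ℝ)) • (1 : Matrix (Fin n) (Fin n) ℝ))

/-- Inverse of the positive-semidefinite square root (junk value `0` off the PSD cone),
so `invSqrt P = P^{−1/2}` for positive definite `P`. -/
def invSqrt {n : ℕ} (P : Matrix (Fin n) (Fin n) ℝ) : Matrix (Fin n) (Fin n) ℝ :=
  if h : P.PosSemidef then
    (h.1.eigenvectorUnitary.1 * diagonal ((↑) ∘ (h.1.eigenvalues · |>.sqrt))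
      * (star h.1.eigenvectorUnitary : Matrix (Fin n) (Fin n) ℝ))⁻¹ else 0

/-- `L(P) = λ_min(P^{−1/2}·Φ(P)·P^{−1/2})`. -/
def Lval (σ : ℝ) (A Abar : Matrix (Fin n) (Fin n) ℝ) (B Bbar : Matrix (Fin n) (Fin m) ℝ)
    (P : Matrix (Fin n) (Fin n) ℝ) : ℝ :=
  lamMin (invSqrt P * Phi σ A Abar B Bbar P * invSqrt P)

/-- `U(P) = λ_max(P^{−1/2}·Φ(P)·P^{−1/2})`. -/
def Uval (σ : ℝ) (A Abar : Matrix (Fin n) (Fin n) ℝ) (B Bbar : Matrix (Fin n) (Fin m) ℝ)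
    (P : Matrix (Fin n) (Fin n) ℝ) : ℝ :=
  lamMax (invSqrt P * Phi σ A Abar B Bbar P * invSqrt P)

/-- The trace-normalized slice `S_a = {X symmetric : X ⪰ a·I, Tr X = 1}`. -/
def Slice (a : ℝ) : Set (Matrix (Fin n) (Fin n) ℝ) :=
  {X | X.IsSymm ∧ (X - a • (1 : Matrix (Fin n) (Fin n) ℝ)).PosSemidef ∧ X.trace = 1}

/-- `α_A = ‖A‖² + σ²·‖Ā‖²` (spectral norms). -/
def alphaA (σ : ℝ) (A Abar : Matrix (Fin n) (Fin n) ℝ) : ℝ :=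
  specNorm A ^ 2 + σ ^ 2 * specNorm Abar ^ 2

/-- `α_S = ‖A‖·‖B‖ + σ²·‖Ā‖·‖B̄‖`. -/
def alphaS (σ : ℝ) (A Abar : Matrix (Fin n) (Fin n) ℝ) (B Bbar : Matrix (Fin n) (Fin m) ℝ) : ℝ :=
  specNorm A * specNorm B + σ ^ 2 * specNorm Abar * specNorm Bbar

/-- `α_R = ‖B‖² + σ²·‖B̄‖²`. -/
def alphaR (σ : ℝ) (B Bbar : Matrix (Fin n) (Fin m) ℝ) : ℝ :=
  specNorm B ^ 2 + σ ^ 2 * specNorm Bbar ^ 2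

/-- `c_R(a) = 1/(a·λ_min(R₀))`. -/
def cR (σ : ℝ) (B Bbar : Matrix (Fin n) (Fin m) ℝ) (a : ℝ) : ℝ :=
  1 / (a * lamMin (Bᵀ * B + σ ^ 2 • (Bbarᵀ * Bbar)))

/-- `L_Φ(a) = α_A + 2·α_S²·c_R(a) + α_S²·α_R·c_R(a)²`. -/
def LPhi (σ : ℝ) (A Abar : Matrix (Fin n) (Fin n) ℝ) (B Bbar : Matrix (Fin n) (Fin m) ℝ)
    (a : ℝ) : ℝ :=
  alphaA σ A Abar + 2 * alphaS σ A Abar B Bbar ^ 2 * cR σ B Bbar a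
    + alphaS σ A Abar B Bbar ^ 2 * alphaR σ B Bbar * cR σ B Bbar a ^ 2

/-- `C_Φ(a) = α_A + α_S²·c_R(a)`. -/
def CPhi (σ : ℝ) (A Abar : Matrix (Fin n) (Fin n) ℝ) (B Bbar : Matrix (Fin n) (Fin m) ℝ)
    (a : ℝ) : ℝ :=
  alphaA σ A Abar + alphaS σ A Abar B Bbar ^ 2 * cR σ B Bbar a

/-- The contraction modulus `Λ(τ)`. -/
def LambdaTau (σ : ℝ) (A Abar : Matrix (Fin n) (Fin n) ℝ) (B Bbar : Matrix (Fin n) (Fin m) ℝ)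
    (τ : ℝ) : ℝ :=
  (1 - τ) * LPhi σ A Abar B Bbar (deltaTau σ A Abar τ) / τ
    + (1 - τ) * ((1 - τ) * CPhi σ A Abar B Bbar (deltaTau σ A Abar τ) + τ / (n : ℝ))
        * (n : ℝ) * LPhi σ A Abar B Bbar (deltaTau σ A Abar τ) / τ ^ 2

/-- The directional derivative `DΦ(P)[H]`. -/
def DPhi (σ : ℝ) (A Abar : Matrix (Fin n) (Fin n) ℝ) (B Bbar : Matrix (Fin n) (Fin m) ℝ)
    (P H : Matrix (Fin n) (Fin n) ℝ) : Matrix (Fin n) (Fin n) ℝ :=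
  Aᵀ * H * A + σ ^ 2 • (Abarᵀ * H * Abar)
    - (Aᵀ * H * B + σ ^ 2 • (Abarᵀ * H * Bbar)) * (Rop σ B Bbar P)⁻¹ * (Sop σ A Abar B Bbar P)ᵀ
    - Sop σ A Abar B Bbar P * (Rop σ B Bbar P)⁻¹ * (Bᵀ * H * A + σ ^ 2 • (Bbarᵀ * H * Abar))
    + Sop σ A Abar B Bbar P * (Rop σ B Bbar P)⁻¹ * (Bᵀ * H * B + σ ^ 2 • (Bbarᵀ * H * Bbar))
        * (Rop σ B Bbar P)⁻¹ * (Sop σ A Abar B Bbar P)ᵀ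

/-- `s_τ(P) = Tr((1−τ)·Φ(P) + (τ/n)·I)`. -/
def sTau (σ : ℝ) (A Abar : Matrix (Fin n) (Fin n) ℝ) (B Bbar : Matrix (Fin n) (Fin m) ℝ)
    (τ : ℝ) (P : Matrix (Fin n) (Fin n) ℝ) : ℝ :=
  Matrix.trace ((1 - τ) • Phi σ A Abar B Bbar P + (τ / (n : ℝ)) • (1 : Matrix (Fin n) (Fin n) ℝ))

/-- The directional derivative
`DΦ̂_τ(P)[H] = ((1−τ)/s_τ(P))·(DΦ(P)[H] − Φ̂_τ(P)·Tr(DΦ(P)[H]))`. -/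
def DPhiHat (σ : ℝ) (A Abar : Matrix (Fin n) (Fin n) ℝ) (B Bbar : Matrix (Fin n) (Fin m) ℝ)
    (τ : ℝ) (P H : Matrix (Fin n) (Fin n) ℝ) : Matrix (Fin n) (Fin n) ℝ :=
  ((1 - τ) / sTau σ A Abar B Bbar τ P) •
    (DPhi σ A Abar B Bbar P H
      - Matrix.trace (DPhi σ A Abar B Bbar P H) • PhiHat σ A Abar B Bbar τ P)

/-- The local Lipschitz modulus `Lip(P,τ) = sup{‖DΦ̂_τ(P)[H]‖ : H symmetric, ‖H‖ = 1}`. -/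
def LipMod (σ : ℝ) (A Abar : Matrix (Fin n) (Fin n) ℝ) (B Bbar : Matrix (Fin n) (Fin m) ℝ)
    (τ : ℝ) (P : Matrix (Fin n) (Fin n) ℝ) : ℝ :=
  ⨆ H : {H : Matrix (Fin n) (Fin n) ℝ // H.IsSymm ∧ specNorm H = 1},
    specNorm (DPhiHat σ A Abar B Bbar τ P H.1)

/-! ### Probabilistic definitions -/

/-- The Gaussian measure on `ℝ` with mean `0` and variance `σ²`. -/
def gauss (σ : ℝ) : Measure ℝ := gaussianReal 0 ⟨σ ^ 2, sq_nonneg σ⟩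

/-- The Gaussian expectation `E_ω[((A+Āω)x + (B+B̄ω)v)ᵀ·P·((A+Āω)x + (B+B̄ω)v)]`. -/
def qform (σ : ℝ) (A Abar : Matrix (Fin n) (Fin n) ℝ) (B Bbar : Matrix (Fin n) (Fin m) ℝ)
    (P : Matrix (Fin n) (Fin n) ℝ) (x : Fin n → ℝ) (v : Fin m → ℝ) : ℝ :=
  ∫ s, (((A + s • Abar).mulVec x + (B + s • Bbar).mulVec v) ⬝ᵥ
      P.mulVec ((A + s • Abar).mulVec x + (B + s • Bbar).mulVec v)) ∂(gauss σ)

/-- The data of the stochastic control system: a probability space `(Ω, F, Pr)`,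
system matrices `A, Ā, B, B̄`, a noise level `σ > 0`, an i.i.d. sequence `w` of
Gaussian random variables with mean `0` and variance `σ²`, and a sub-σ-algebra `G`
independent of the noise. -/
structure Ctx (n m : ℕ) (Ω : Type) [mΩ : MeasurableSpace Ω] where
  Pr : Measure Ω
  isProb : IsProbabilityMeasure Pr
  σ : ℝ
  hσ : 0 < σ
  A : Matrix (Fin n) (Fin n) ℝ
  Abar : Matrix (Fin n) (Fin n) ℝ
  B : Matrix (Fin n) (Fin m) ℝ
  Bbar : Matrix (Fin n) (Fin m) ℝ
  w : ℕ → Ω → ℝ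
  hw_meas : ∀ k, Measurable (w k)
  hw_gauss : ∀ k, Pr.map (w k) = gauss σ
  hw_iid : iIndepFun w Pr
  G : MeasurableSpace Ω
  hG : G ≤ mΩ
  hw_indep_G : Indep (⨆ k, MeasurableSpace.comap (w k) inferInstance) G Pr

variable {Ω : Type} [MeasurableSpace Ω]

/-- The filtration `F_k = G ∨ σ(ω₀, …, ω_{k−1})`. -/
def Ctx.Fk (C : Ctx n m Ω) (k : ℕ) : MeasurableSpace Ω :=
  C.G ⊔ ⨆ i ∈ Finset.range k, MeasurableSpace.comap (C.w i) inferInstance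

/-- Admissible policies: `u_k` is `F_k`-measurable and square-integrable. -/
def Ctx.Admissible (C : Ctx n m Ω) (u : ℕ → Ω → Fin m → ℝ) : Prop :=
  ∀ k, Measurable[C.Fk k] (u k) ∧ MemLp (u k) 2 C.Pr

/-- Admissible initial states: `G`-measurable and square-integrable. -/
def Ctx.InitOK (C : Ctx n m Ω) (x : Ω → Fin n → ℝ) : Prop :=
  Measurable[C.G] x ∧ MemLp x 2 C.Pr

/-- The state trajectory `x_{k+1} = (A + Ā·ω_k)x_k + (B + B̄·ω_k)u_k`. -/
def Ctx.traj (C : Ctx n m Ω) (x0 : Ω → Fin n → ℝ) (u : ℕ → Ω → Fin m → ℝ) :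
    ℕ → Ω → Fin n → ℝ
  | 0 => x0
  | k + 1 => fun s =>
      (C.A + C.w k s • C.Abar).mulVec (C.traj x0 u k s)
      + (C.B + C.w k s • C.Bbar).mulVec (u k s)

/-- `E[xᵀx]`. -/
def msSq {n : ℕ} (Pr : Measure Ω) (x : Ω → Fin n → ℝ) : ℝ := ∫ s, x s ⬝ᵥ x s ∂Pr

/-- The mean-square norm `‖x‖_ms = (E[xᵀx])^{1/2}`. -/
def msNorm {n : ℕ} (Pr : Measure Ω) (x : Ω → Fin n → ℝ) : ℝ := Real.sqrt (msSq Pr x)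

/-- The mean-square stabilizing rate `ρ(u)` of a policy. -/
def Ctx.rate (C : Ctx n m Ω) (u : ℕ → Ω → Fin m → ℝ) : ℝ :=
  sInf {ρ : ℝ | 0 ≤ ρ ∧ ∃ κ : ℝ, 0 ≤ κ ∧ ∀ x0, C.InitOK x0 → ∀ k : ℕ,
    msSq C.Pr (C.traj x0 u k) ≤ κ * ρ ^ (2 * k) * msSq C.Pr x0}

/-- The optimal stabilizing rate `ρ* = inf_{u ∈ U} ρ(u)`. -/
def Ctx.rhoStar (C : Ctx n m Ω) : ℝ :=
  sInf {r : ℝ | ∃ u, C.Admissible u ∧ r = C.rate u}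

/-- `η(x) = inf_{u ∈ U} sup_{k ∈ ℕ} ‖x_k‖_ms/(ρ*)^k` (with values in `[0,∞]`). -/
def Ctx.eta (C : Ctx n m Ω) (x : Ω → Fin n → ℝ) : ℝ≥0∞ :=
  ⨅ (u : ℕ → Ω → Fin m → ℝ) (_ : C.Admissible u),
    ⨆ k : ℕ, ENNReal.ofReal (msNorm C.Pr (C.traj x u k) / C.rhoStar ^ k)

/-- The per-trajectory mean-square stabilizing rate `ρ(u; x₀)`. -/
def Ctx.rateAt (C : Ctx n m Ω) (x0 : Ω → Fin n → ℝ) (u : ℕ → Ω → Fin m → ℝ) : ℝ :=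
  sInf {ρ : ℝ | 0 ≤ ρ ∧ ∃ κ : ℝ, 0 ≤ κ ∧ ∀ k : ℕ,
    msSq C.Pr (C.traj x0 u k) ≤ κ * ρ ^ (2 * k) * msSq C.Pr x0}

/-- The cost `J(x₀,u) = limsup_k (1/k)·log(E[x_kᵀx_k]/E[x₀ᵀx₀])`. -/
def Ctx.J (C : Ctx n m Ω) (x0 : Ω → Fin n → ℝ) (u : ℕ → Ω → Fin m → ℝ) : ℝ :=
  Filter.limsup
    (fun k : ℕ => (1 / (k : ℝ)) * Real.log (msSq C.Pr (C.traj x0 u k) / msSq C.Pr x0))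
    Filter.atTop

/-- Feedback policies: `u_k = μ_k(x_k)` for Borel-measurable `μ_k`. -/
def Ctx.IsFeedback (C : Ctx n m Ω) (x0 : Ω → Fin n → ℝ) (u : ℕ → Ω → Fin m → ℝ) : Prop :=
  ∃ μ : ℕ → (Fin n → ℝ) → Fin m → ℝ, (∀ k, Measurable (μ k)) ∧
    ∀ k s, u k s = μ k (C.traj x0 u k s)

/-- The closed-loop trajectory under a stationary feedback law `μ`. -/
def Ctx.fbTraj (C : Ctx n m Ω) (x0 : Ω → Fin n → ℝ) (μ : (Fin n → ℝ) → Fin m → ℝ) :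
    ℕ → Ω → Fin n → ℝ
  | 0 => x0
  | k + 1 => fun s =>
      (C.A + C.w k s • C.Abar).mulVec (C.fbTraj x0 μ k s)
      + (C.B + C.w k s • C.Bbar).mulVec (μ (C.fbTraj x0 μ k s))

/-- The stationary policy `u* given by `u*_k = μ(x*_k)` along its own closed-loop
trajectory, for a stationary feedback law `μ`. -/
def Ctx.fbPolicy (C : Ctx n m Ω) (x0 : Ω → Fin n → ℝ) (μ : (Fin n → ℝ) → Fin m → ℝ) :
    ℕ → Ω → Fin m → ℝ :=
  fun k s => μ (C.fbTraj x0 μ k s)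

/-- The linear feedback policy `u*_k = −K·x*_k` along its own trajectory. -/
def Ctx.linFbPolicy (C : Ctx n m Ω) (x0 : Ω → Fin n → ℝ) (K : Matrix (Fin m) (Fin n) ℝ) :
    ℕ → Ω → Fin m → ℝ :=
  C.fbPolicy x0 (fun x => -(K.mulVec x))

/-- `ξ_♯(x) = inf_{v ∈ ℝ^m} ‖(A + Ā·ω)x + (B + B̄·ω)v‖_ms`, realized with `ω = ω₀`. -/
def Ctx.xiSharp (C : Ctx n m Ω) (x : Ω → Fin n → ℝ) : ℝ :=
  ⨅ v : Fin m → ℝ, msNorm C.Pr (fun s =>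
    (C.A + C.w 0 s • C.Abar).mulVec (x s) + (C.B + C.w 0 s • C.Bbar).mulVec v)

/-- Extended-real logarithm: `log t` for `t > 0` and `−∞` for `t ≤ 0`. -/
def elog (t : ℝ) : EReal := if t ≤ 0 then ⊥ else ((Real.log t : ℝ) : EReal)

/-- The cost `J(x₀,u)` interpreted with values in `[−∞,∞]`. -/
def Ctx.Je (C : Ctx n m Ω) (x0 : Ω → Fin n → ℝ) (u : ℕ → Ω → Fin m → ℝ) : EReal :=
  Filter.limsup
    (fun k : ℕ => ((1 / (k : ℝ) : ℝ) : EReal) * elog (msSq C.Pr (C.traj x0 u k) / msSq C.Pr x0))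
    Filter.atTop



/-! ### Auxiliary lemmas for Statement 18 -/

section Aux18

variable {n : ℕ}

lemma psd_smul' {A : Matrix (Fin n) (Fin n) ℝ} (hA : A.PosSemidef) {c : ℝ} (hc : 0 ≤ c) :
    (c • A).PosSemidef := by
  refine ⟨?_, fun x => ?_⟩
  · have h : Aᵀ = A := by
      rw [← Matrix.conjTranspose_eq_transpose_of_trivial]; exact hA.1
    unfold Matrix.IsHermitian
    rw [Matrix.conjTranspose_smul]
    simp [Matrix.conjTranspose_eq_transpose_of_trivial, h]
  · exact (hA.smul hc).2 x

lemma psd_trace_nonneg' {A : Matrix (Fin n) (Fin n) ℝ} (hA : A.PosSemidef) :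
    0 ≤ A.trace := by
  rw [Matrix.trace]
  refine Finset.sum_nonneg fun i _ => ?_
  have h := hA.dotProduct_mulVec_nonneg (Pi.single i 1)
  simpa [single_dotProduct, Matrix.mulVec_single] using h

lemma dotProduct_self_nonneg' (v : Fin n → ℝ) : 0 ≤ v ⬝ᵥ v :=
  Finset.sum_nonneg fun i _ => mul_self_nonneg _

theorem sphere_nonempty' (hn : 0 < n) : Nonempty {x : Fin n → ℝ // x ⬝ᵥ x = 1} :=
  ⟨⟨Pi.single ⟨0, hn⟩ 1, by simp [single_dotProduct]⟩⟩

lemma rayleigh_bddAbove' (M : Matrix (Fin n) (Fin n) ℝ) :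
    BddAbove (Set.range fun x : {x : Fin n → ℝ // x ⬝ᵥ x = 1} =>
      x.1 ⬝ᵥ M.mulVec x.1) := by
  refine ⟨∑ i, ∑ j, |M i j|, ?_⟩
  rintro r ⟨⟨x, hx⟩, rfl⟩
  dsimp only
  have hxb : ∀ i, |x i| ≤ 1 := by
    intro i
    have h1 : x i * x i ≤ 1 := by
      rw [← hx]
      exact Finset.single_le_sum (fun j _ => mul_self_nonneg (x j)) (Finset.mem_univ i)
    nlinarith [abs_nonneg (x i), abs_mul_abs_self (x i)]
  have : x ⬝ᵥ M.mulVec x = ∑ i, ∑ j, x i * (M i j * x j) := by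
    simp [dotProduct, Matrix.mulVec, Finset.mul_sum]
  rw [this]
  refine Finset.sum_le_sum fun i _ => Finset.sum_le_sum fun j _ => ?_
  have h1 := hxb i
  have h2 := hxb j
  have h3 : |x i * (M i j * x j)| ≤ |M i j| := by
    rw [abs_mul, abs_mul]
    calc |x i| * (|M i j| * |x j|) ≤ 1 * (|M i j| * 1) := by
          apply mul_le_mul h1 _ (by positivity) zero_le_one
          exact mul_le_mul_of_nonneg_left h2 (abs_nonneg _)
      _ = |M i j| := by ring
  exact le_trans (le_abs_self _) h3

lemma rayleigh_le_lamMax' (hn : 0 < n) (M : Matrix (Fin n) (Fin n) ℝ) (y : Fin n → ℝ) :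
    y ⬝ᵥ M.mulVec y ≤ lamMax M * (y ⬝ᵥ y) := by
  have hne := sphere_nonempty' hn
  rcases eq_or_lt_of_le (dotProduct_self_nonneg' y) with h0 | hpos
  · have : y = 0 := dotProduct_self_eq_zero.mp h0.symm
    simp [this]
  · set c := y ⬝ᵥ y with hc
    have hcpos : 0 < c := hpos
    have hs : (0:ℝ) < Real.sqrt c := Real.sqrt_pos.mpr hcpos
    set x : Fin n → ℝ := (Real.sqrt c)⁻¹ • y with hxdef
    have hxx : x ⬝ᵥ x = 1 := by
      rw [hxdef]
      rw [smul_dotProduct, dotProduct_smul]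
      simp only [smul_eq_mul, ← hc]
      rw [← mul_assoc, ← mul_inv]
      rw [Real.mul_self_sqrt hcpos.le]
      exact inv_mul_cancel₀ hcpos.ne'
    have hle : x ⬝ᵥ M.mulVec x ≤ lamMax M :=
      le_ciSup (rayleigh_bddAbove' M) (⟨x, hxx⟩ : {x : Fin n → ℝ // x ⬝ᵥ x = 1})
    have hxy : x ⬝ᵥ M.mulVec x = (Real.sqrt c)⁻¹ * ((Real.sqrt c)⁻¹ * (y ⬝ᵥ M.mulVec y)) := by
      rw [hxdef]
      rw [smul_dotProduct, Matrix.mulVec_smul, dotProduct_smul]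
      simp [smul_eq_mul]
    have hcs : Real.sqrt c * Real.sqrt c = c := Real.mul_self_sqrt hcpos.le
    have := mul_le_mul_of_nonneg_left hle (le_of_lt (mul_pos hs hs))
    rw [hxy] at this
    calc y ⬝ᵥ M.mulVec y
        = Real.sqrt c * Real.sqrt c * ((Real.sqrt c)⁻¹ * ((Real.sqrt c)⁻¹ * (y ⬝ᵥ M.mulVec y))) := by
          field_simp
      _ ≤ Real.sqrt c * Real.sqrt c * lamMax M := this
      _ = lamMax M * (y ⬝ᵥ y) := by rw [hcs, ← hc]; ring

lemma trace_mul_le_lamMax' (hn : 0 < n) {P : Matrix (Fin n) (Fin n) ℝ} (hP : P.PosSemidef)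
    (M : Matrix (Fin n) (Fin n) ℝ) :
    (P * M).trace ≤ lamMax M * P.trace := by
  set Q := (open scoped MatrixOrder in CFC.sqrt P) with hQdef
  have hQQ : Q * Q = P := by open scoped MatrixOrder in exact CFC.sqrt_mul_sqrt_self P hP.nonneg
  have hQs : ∀ i j, Q i j = Q j i := fun i j => by
    have h : Q j i = Q i j := by
      simpa using (show Q.PosSemidef by open scoped MatrixOrder in exact (CFC.sqrt_nonneg P).posSemidef).isHermitian.apply i j
    exact h.symm
  have htr : (P * M).trace = ∑ i, (Q i) ⬝ᵥ M.mulVec (Q i) := by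
    rw [← hQQ, Matrix.mul_assoc, Matrix.trace_mul_comm, Matrix.trace]
    refine Finset.sum_congr rfl fun i _ => ?_
    simp only [Matrix.diag_apply, Matrix.mul_apply, dotProduct, Matrix.mulVec,
      Finset.sum_mul, Finset.mul_sum]
    rw [Finset.sum_comm]
    refine Finset.sum_congr rfl fun j _ => Finset.sum_congr rfl fun k _ => ?_
    rw [hQs k i]
    ring
  have htrP : P.trace = ∑ i, (Q i) ⬝ᵥ (Q i) := by
    rw [← hQQ, Matrix.trace]
    refine Finset.sum_congr rfl fun i _ => ?_
    simp only [Matrix.diag_apply, Matrix.mul_apply, dotProduct]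
    refine Finset.sum_congr rfl fun j _ => ?_
    rw [hQs j i]
  rw [htr, htrP, Finset.mul_sum]
  exact Finset.sum_le_sum fun i _ => rayleigh_le_lamMax' hn M (Q i)

end Aux18

/-- For `P ⪰ 0` with `R(P) ≻ 0`: `Φ(P)` is symmetric positive
semidefinite, `Φ(P) ⪯ AᵀPA + σ²·ĀᵀPĀ`, and
`Tr Φ(P) ≤ λ_max(AAᵀ + σ²·ĀĀᵀ)·Tr P`. -/
theorem phi_psd_trace_bound {n m : ℕ} (hn : 0 < n) (hm : 0 < m)
    (σ : ℝ) (hσ : 0 < σ)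
    (A Abar : Matrix (Fin n) (Fin n) ℝ) (B Bbar : Matrix (Fin n) (Fin m) ℝ)
    (P : Matrix (Fin n) (Fin n) ℝ) (hP : P.PosSemidef)
    (hR : (Rop σ B Bbar P).PosDef) :
    (Phi σ A Abar B Bbar P).PosSemidef ∧
    (Aᵀ * P * A + σ ^ 2 • (Abarᵀ * P * Abar) - Phi σ A Abar B Bbar P).PosSemidef ∧
    Matrix.trace (Phi σ A Abar B Bbar P)
      ≤ lamMax (A * Aᵀ + σ ^ 2 • (Abar * Abarᵀ)) * Matrix.trace P := by
  classical
  have hPt : Pᵀ = P := by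
    rw [← Matrix.conjTranspose_eq_transpose_of_trivial]; exact hP.1
  set s := σ ^ 2 with hs
  have hs0 : 0 ≤ s := sq_nonneg σ
  set R := Rop σ B Bbar P with hRdef
  set S := Sop σ A Abar B Bbar P with hSdef
  have hRt : Rᵀ = R := by
    rw [hRdef]
    simp [Rop, Matrix.transpose_add, Matrix.transpose_smul, Matrix.transpose_mul,
      hPt, Matrix.mul_assoc]
  have hRunit : IsUnit R.det := hR.det_pos.ne'.isUnit
  have hRinv : R⁻¹ * R = 1 := Matrix.nonsing_inv_mul R hRunit
  have hRinvT : R⁻¹ᵀ = R⁻¹ := by rw [Matrix.transpose_nonsing_inv, hRt]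
  set K := R⁻¹ * Sᵀ with hKdef
  have hKt : Kᵀ = S * R⁻¹ := by
    rw [hKdef, Matrix.transpose_mul, Matrix.transpose_transpose, hRinvT]
  have hSK : S * K = S * R⁻¹ * Sᵀ := by rw [hKdef, Matrix.mul_assoc]
  have hKSt : Kᵀ * Sᵀ = S * R⁻¹ * Sᵀ := by rw [hKt]
  have hKRK : Kᵀ * R * K = S * R⁻¹ * Sᵀ := by
    rw [hKt, Matrix.mul_assoc S R⁻¹ R, hRinv, Matrix.mul_one]
    exact hSK
  have key : (A - B * K)ᵀ * P * (A - B * K)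
      + s • ((Abar - Bbar * K)ᵀ * P * (Abar - Bbar * K)) = Phi σ A Abar B Bbar P := by
    have expand : (A - B * K)ᵀ * P * (A - B * K)
        + s • ((Abar - Bbar * K)ᵀ * P * (Abar - Bbar * K))
        = (Aᵀ * P * A + s • (Abarᵀ * P * Abar)) - S * K - Kᵀ * Sᵀ + Kᵀ * R * K := by
      rw [hSdef, hRdef]
      simp only [Sop, Rop, ← hs, Matrix.transpose_sub, Matrix.transpose_add,
        Matrix.transpose_smul, Matrix.transpose_mul, Matrix.transpose_transpose, hPt,
        Matrix.sub_mul, Matrix.mul_sub, Matrix.add_mul, Matrix.mul_add,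
        Matrix.smul_mul, Matrix.mul_smul, smul_sub, smul_add, Matrix.mul_assoc]
      abel
    rw [expand, hSK, hKSt, hKRK]
    show _ = Aᵀ * P * A + s • (Abarᵀ * P * Abar) - S * R⁻¹ * Sᵀ
    abel
  have hconj : ∀ (F : Matrix (Fin n) (Fin n) ℝ), (Fᵀ * P * F).PosSemidef := fun F => by
    have h := hP.conjTranspose_mul_mul_same F
    rwa [Matrix.conjTranspose_eq_transpose_of_trivial] at h
  have hPhiPsd : (Phi σ A Abar B Bbar P).PosSemidef := by
    rw [← key]
    exact (hconj (A - B * K)).add (psd_smul' (hconj (Abar - Bbar * K)) hs0)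
  have hSRS : (S * R⁻¹ * Sᵀ).PosSemidef := by
    have h := hR.inv.posSemidef.mul_mul_conjTranspose_same S
    rwa [Matrix.conjTranspose_eq_transpose_of_trivial] at h
  have hdiff : Aᵀ * P * A + s • (Abarᵀ * P * Abar) - Phi σ A Abar B Bbar P
      = S * R⁻¹ * Sᵀ := by
    show _ - (Aᵀ * P * A + s • (Abarᵀ * P * Abar) - S * R⁻¹ * Sᵀ) = _
    abel
  refine ⟨hPhiPsd, by rw [hdiff]; exact hSRS, ?_⟩
  have htr1 : (Phi σ A Abar B Bbar P).trace
      ≤ (Aᵀ * P * A + s • (Abarᵀ * P * Abar)).trace := by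
    have h := psd_trace_nonneg' hSRS
    have : (Phi σ A Abar B Bbar P).trace
        = (Aᵀ * P * A + s • (Abarᵀ * P * Abar)).trace - (S * R⁻¹ * Sᵀ).trace := by
      show (Aᵀ * P * A + s • (Abarᵀ * P * Abar) - S * R⁻¹ * Sᵀ).trace = _
      rw [Matrix.trace_sub]
    linarith
  have htr2 : (Aᵀ * P * A + s • (Abarᵀ * P * Abar)).trace
      = (P * (A * Aᵀ + s • (Abar * Abarᵀ))).trace := by
    rw [Matrix.mul_add, Matrix.trace_add, Matrix.trace_add, Matrix.trace_smul,
      Matrix.mul_smul, Matrix.trace_smul]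
    congr 1
    · rw [Matrix.trace_mul_cycle Aᵀ P A, Matrix.trace_mul_comm]
    · congr 1
      rw [Matrix.trace_mul_cycle Abarᵀ P Abar, Matrix.trace_mul_comm]
  calc (Phi σ A Abar B Bbar P).trace
      ≤ (P * (A * Aᵀ + s • (Abar * Abarᵀ))).trace := htr2 ▸ htr1
    _ ≤ lamMax (A * Aᵀ + s • (Abar * Abarᵀ)) * P.trace :=
        trace_mul_le_lamMax' hn hP _


end SCS
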